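/- arXiv:2211.16494 — 6 statements merged into one kernel-verified Lean document; each statement's English description precedes it below -/
import Mathlib

section
/- For f : (R^{D_x})^N → R, M template vectors v^{(1)},...,v^{(M)} ∈ R^{D_x}, and the grid tensor B(f) ∈ R^{M×···×M} defined by B(f)_{d_1,...,d_N} = f(v^{(d_1)},...,v^{(d_N)}), it holds for any I ⊆ [N] that the rank of the matricization of B(f) with respect to I is at most the separation rank of f with respect to I. -/
/-- A representation of `f` as a sum of `R` products of functions of the
variables indexed by `I` and of the remaining variables. -/
def SepRep {N Dx : ℕ} (f : (Fin N → (Fin Dx → ℝ)) → ℝ) (I : Finset (Fin N)) (R : ℕ) : Prop :=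
  ∃ (g : Fin R → ({i : Fin N // i ∈ I} → (Fin Dx → ℝ)) → ℝ)
    (g' : Fin R → ({j : Fin N // j ∉ I} → (Fin Dx → ℝ)) → ℝ),
    ∀ X : Fin N → (Fin Dx → ℝ),
      f X = ∑ r : Fin R, g r (fun i => X i.1) * g' r (fun j => X j.1)

/-- The separation rank of `f` with respect to `I`: minimal number of summands
(`0` if `f ≡ 0`, `⊤` if no finite representation exists). -/
noncomputable def sepRank {N Dx : ℕ} (f : (Fin N → (Fin Dx → ℝ)) → ℝ)
    (I : Finset (Fin N)) : ℕ∞ :=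
  sInf {n : ℕ∞ | ∃ R : ℕ, n = (R : ℕ∞) ∧ SepRep f I R}

/-- The rank of the matricization (with respect to `I`) of the grid tensor of
`f` over template vectors `v` lower bounds the separation rank of `f`. -/
theorem gridTensor_matricization_rank_le_sepRank {N Dx M : ℕ}
    (f : (Fin N → (Fin Dx → ℝ)) → ℝ) (v : Fin M → (Fin Dx → ℝ))
    (I : Finset (Fin N)) :
    ((Matrix.of fun (a : {i : Fin N // i ∈ I} → Fin M)
        (b : {j : Fin N // j ∉ I} → Fin M) =>
        f (fun i => v (if h : i ∈ I then a ⟨i, h⟩ else b ⟨i, h⟩))).rank : ℕ∞)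
      ≤ sepRank f I := by
  apply le_sInf
  rintro n ⟨R, rfl, g, g', hrep⟩
  have : (Matrix.of fun (a : {i : Fin N // i ∈ I} → Fin M)
        (b : {j : Fin N // j ∉ I} → Fin M) =>
        f (fun i => v (if h : i ∈ I then a ⟨i, h⟩ else b ⟨i, h⟩)))
      = (Matrix.of fun a r => g r (fun i => v (a i))) *
        (Matrix.of fun r b => g' r (fun j => v (b j))) := by
    ext a b
    simp only [Matrix.mul_apply, Matrix.of_apply]
    rw [hrep]
    refine Finset.sum_congr rfl fun r _ => ?_
    congr 1
    · congr 1; ext i; simp [i.2]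
    · congr 1; ext j; simp [j.2]
  rw [this]
  exact Nat.cast_le.mpr (((Matrix.rank_mul_le _ _).trans (min_le_left _ _)).trans
    ((Matrix.rank_le_card_width _).trans (Fintype.card_fin R).le))
end

section
/- For any D ∈ N and P ∈ N_{≥0}, there exists a matrix Z ∈ R^{M×D} with strictly positive entries, where M = C(D+P-1, P), such that the P-th entrywise (Hadamard) power of the Gram matrix Z Z^T has full rank M. -/
open Matrix Polynomial Finset

-- strict Cauchy-Schwarz-ish lemma in ℕ
lemma nat_two_mul_lt_add_sq {a b : ℕ} (h : a ≠ b) : 2 * (a * b) < a ^ 2 + b ^ 2 := by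
  rcases lt_or_gt_of_ne h with h | h
  · nlinarith
  · nlinarith

lemma nat_two_mul_le_add_sq (a b : ℕ) : 2 * (a * b) ≤ a ^ 2 + b ^ 2 := by
  rw [← mul_assoc]; exact two_mul_le_add_sq a b

section Main

variable {M D : ℕ} (v : Fin M → Fin D → ℕ) (hv : Function.Injective v)

/-- dot products of exponent vectors -/
def dd (v : Fin M → Fin D → ℕ) (m n : Fin M) : ℕ := ∑ j, v m j * v n j

lemma dd_symm (m n : Fin M) : dd v m n = dd v n m := by
  unfold dd; congr 1; ext j; ring

include hv in
lemma sum_dd_lt (σ : Equiv.Perm (Fin M)) (hσ : σ ≠ 1) :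
    ∑ m, dd v (σ m) m < ∑ m, dd v m m := by
  have key : 2 * ∑ m, dd v (σ m) m < 2 * ∑ m, dd v m m := by
    have h1 : ∀ m : Fin M, 2 * dd v (σ m) m ≤ dd v (σ m) (σ m) + dd v m m := by
      intro m
      unfold dd
      rw [Finset.mul_sum, ← Finset.sum_add_distrib]
      refine Finset.sum_le_sum fun j _ => ?_
      have := nat_two_mul_le_add_sq (v (σ m) j) (v m j)
      nlinarith [nat_two_mul_le_add_sq (v (σ m) j) (v m j)]
    obtain ⟨m₀, hm₀⟩ : ∃ m, σ m ≠ m := by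
      by_contra h
      push_neg at h
      exact hσ (Equiv.ext fun x => h x)
    have hne : v (σ m₀) ≠ v m₀ := fun h => hm₀ (hv h)
    obtain ⟨j₀, hj₀⟩ : ∃ j, v (σ m₀) j ≠ v m₀ j := Function.ne_iff.mp hne
    have h2 : 2 * dd v (σ m₀) m₀ < dd v (σ m₀) (σ m₀) + dd v m₀ m₀ := by
      unfold dd
      rw [Finset.mul_sum, ← Finset.sum_add_distrib]
      refine Finset.sum_lt_sum (fun j _ => ?_) ⟨j₀, Finset.mem_univ _, ?_⟩
      · have := nat_two_mul_le_add_sq (v (σ m₀) j) (v m₀ j); nlinarith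
      · have := nat_two_mul_lt_add_sq hj₀; nlinarith
    calc 2 * ∑ m, dd v (σ m) m = ∑ m, 2 * dd v (σ m) m := by rw [Finset.mul_sum]
    _ < ∑ m, (dd v (σ m) (σ m) + dd v m m) :=
        Finset.sum_lt_sum (fun m _ => h1 m) ⟨m₀, Finset.mem_univ _, h2⟩
    _ = ∑ m, dd v (σ m) (σ m) + ∑ m, dd v m m := Finset.sum_add_distrib
    _ = 2 * ∑ m, dd v m m := by
        rw [Equiv.sum_comp σ (fun m => dd v m m), two_mul]
  omega

include hv in
lemma det_poly_ne_zero :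
    (Matrix.of fun m n : Fin M => (X : ℝ[X]) ^ dd v m n).det ≠ 0 := by
  set A : Matrix (Fin M) (Fin M) ℝ[X] := Matrix.of fun m n => (X : ℝ[X]) ^ dd v m n
  have hdet : A.det = ∑ σ : Equiv.Perm (Fin M),
      (Equiv.Perm.sign σ : ℤ) • (X : ℝ[X]) ^ ∑ i, dd v (σ i) i := by
    rw [Matrix.det_apply]
    refine Finset.sum_congr rfl fun σ _ => ?_
    congr 1
    rw [← Finset.prod_pow_eq_pow_sum]
    rfl
  intro h
  have hc : A.det.coeff (∑ m, dd v m m) = 1 := by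
    rw [hdet, Polynomial.finset_sum_coeff]
    rw [Finset.sum_eq_single (1 : Equiv.Perm (Fin M))]
    · simp
    · intro σ _ hσ
      have hlt := sum_dd_lt v hv σ hσ
      rw [Polynomial.coeff_smul, Polynomial.coeff_X_pow, if_neg hlt.ne', smul_zero]
    · simp
  rw [h] at hc
  simp at hc

end Main

/-- For any `D ∈ ℕ` and `P ∈ ℕ≥0`, there exists a matrix `Z` with strictly
positive entries, with `M = C(D + P - 1, P)` rows and `D` columns, such that
the `P`-th Hadamard power of the Gram matrix `Z Zᵀ` has full rank `M`. -/
theorem exists_pos_matrix_hadamard_power_full_rank (D P : ℕ) (hD : 1 ≤ D) :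
    ∃ Z : Matrix (Fin ((D + P - 1).choose P)) (Fin D) ℝ,
      (∀ m n, 0 < Z m n) ∧
      (Matrix.of fun m n => ((Z * Zᵀ) m n) ^ P).rank = (D + P - 1).choose P := by
  classical
  haveI : Fintype {f : Fin D → ℕ // ∑ i, f i = P} :=
    Fintype.ofEquiv _ (Sym.equivNatSumOfFintype (Fin D) P)
  set M := (D + P - 1).choose P with hM
  have cardT : Fintype.card {f : Fin D → ℕ // ∑ i, f i = P} = M := by
    rw [← Fintype.card_congr (Sym.equivNatSumOfFintype (Fin D) P),
      Sym.card_sym_eq_choose, Fintype.card_fin]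
  let e : Fin M ≃ {f : Fin D → ℕ // ∑ i, f i = P} := (Fintype.equivFinOfCardEq cardT).symm
  let v : Fin M → Fin D → ℕ := fun m => (e m).1
  have hv : Function.Injective v := fun a b h => e.injective (Subtype.ext h)
  have hdet0 := det_poly_ne_zero v hv
  obtain ⟨u, hu0, hu⟩ : ∃ u : ℝ, 0 < u ∧
      Polynomial.eval u (Matrix.of fun m n : Fin M => (X : ℝ[X]) ^ dd v m n).det ≠ 0 := by
    have hfin := Polynomial.finite_setOf_isRoot hdet0
    have hinf : (Set.Ioi (0:ℝ)).Infinite := Set.Ioi_infinite 0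
    obtain ⟨u, hu⟩ := (hinf.diff hfin).nonempty
    exact ⟨u, hu.1, hu.2⟩
  refine ⟨Matrix.of fun m j => u ^ v m j, fun m n => pow_pos hu0 _, ?_⟩
  -- the weighted Veronese matrix
  set c : Fin M → ℝ := fun k => Real.sqrt (Nat.multinomial Finset.univ (v k)) with hc
  have hcpos : ∀ k, 0 < c k := fun k => Real.sqrt_pos.mpr
    (by exact_mod_cast Nat.multinomial_pos _ _)
  set Ψ : Matrix (Fin M) (Fin M) ℝ := Matrix.of fun m k => u ^ dd v m k * c k with hΨ
  have key : (Matrix.of fun m n =>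
      (((Matrix.of fun m j => u ^ v m j) * (Matrix.of fun m j => u ^ v m j)ᵀ) m n) ^ P)
      = Ψ * Ψᵀ := by
    ext m n
    simp only [Matrix.of_apply, Matrix.mul_apply, Matrix.transpose_apply]
    have hsum : ∀ t : Fin D → ℕ,
        (Nat.multinomial Finset.univ t : ℝ) * ∏ j, (u ^ v m j * u ^ v n j) ^ t j
        = (Nat.multinomial Finset.univ t : ℝ)
            * u ^ (∑ j, v m j * t j) * u ^ (∑ j, v n j * t j) := by
      intro t
      rw [mul_assoc]
      congr 1
      rw [← Finset.prod_pow_eq_pow_sum, ← Finset.prod_pow_eq_pow_sum, ← Finset.prod_mul_distrib]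
      refine Finset.prod_congr rfl fun j _ => ?_
      rw [mul_pow, ← pow_mul, ← pow_mul, mul_comm (v m j), mul_comm (v n j)]
    calc (∑ j, u ^ v m j * u ^ v n j) ^ P
        = ∑ k ∈ Finset.piAntidiag Finset.univ P,
            (Nat.multinomial Finset.univ k : ℝ) * ∏ j, (u ^ v m j * u ^ v n j) ^ k j :=
          Finset.sum_pow_eq_sum_piAntidiag _ _ P
      _ = ∑ t : {f : Fin D → ℕ // ∑ i, f i = P},
            (Nat.multinomial Finset.univ t.1 : ℝ) * ∏ j, (u ^ v m j * u ^ v n j) ^ t.1 j := by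
          rw [Finset.sum_subtype]
          intro f
          simp [Finset.mem_piAntidiag]
      _ = ∑ k : Fin M,
            (Nat.multinomial Finset.univ (v k) : ℝ) * ∏ j, (u ^ v m j * u ^ v n j) ^ v k j :=
          (Equiv.sum_comp e fun t =>
            (Nat.multinomial Finset.univ t.1 : ℝ) * ∏ j, (u ^ v m j * u ^ v n j) ^ t.1 j).symm
      _ = ∑ k, Ψ m k * Ψ n k := by
          refine Finset.sum_congr rfl fun k _ => ?_
          rw [hsum (v k)]
          simp only [hΨ, Matrix.of_apply]
          have : c k * c k = (Nat.multinomial Finset.univ (v k) : ℝ) :=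
            Real.mul_self_sqrt (by positivity)
          unfold dd
          rw [← this]
          ring
  rw [key]
  have hdetV : (Matrix.of fun m k : Fin M => u ^ dd v m k).det ≠ 0 := by
    have : (Matrix.of fun m k : Fin M => u ^ dd v m k)
        = (Polynomial.evalRingHom u).mapMatrix (Matrix.of fun m n : Fin M => (X : ℝ[X]) ^ dd v m n) := by
      ext m k
      simp
    rw [this, ← RingHom.map_det]
    exact hu
  have hdetΨ : Ψ.det ≠ 0 := by
    have : Ψ = (Matrix.of fun m k : Fin M => u ^ dd v m k) * Matrix.diagonal c := by
      ext m k
      rw [Matrix.mul_diagonal]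
      rfl
    rw [this, Matrix.det_mul, Matrix.det_diagonal]
    exact mul_ne_zero hdetV (Finset.prod_ne_zero_iff.mpr fun k _ => (hcpos k).ne')
  have hunit : IsUnit (Ψ * Ψᵀ) := by
    rw [Matrix.isUnit_iff_isUnit_det, Matrix.det_mul, Matrix.det_transpose, isUnit_iff_ne_zero]
    exact mul_ne_zero hdetΨ hdetΨ
  rw [Matrix.rank_of_isUnit _ hunit, Fintype.card_fin]
end

section
/- The rank of the P-th Hadamard power of any matrix of rank at most D is at most the multiset coefficient C(D+P-1, P). -/
open Matrix Finset in
lemma exists_factorization {m n : Type*} [Fintype m] [Fintype n]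
    [DecidableEq m] [DecidableEq n] (A : Matrix m n ℝ) :
    ∃ X : Matrix m (Fin A.rank) ℝ, ∃ Y : Matrix (Fin A.rank) n ℝ, A = X * Y := by
  classical
  set W : Submodule ℝ (m → ℝ) := Submodule.span ℝ (Set.range Aᵀ) with hW
  have hrank : A.rank = Module.finrank ℝ W := A.rank_eq_finrank_span_cols
  let b : Module.Basis (Fin A.rank) ℝ W := Module.finBasisOfFinrankEq ℝ W hrank.symm
  have hcol : ∀ j, (Aᵀ j) ∈ W := fun j => Submodule.subset_span ⟨j, rfl⟩
  let c : n → W := fun j => ⟨Aᵀ j, hcol j⟩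
  refine ⟨fun i d => (b d : m → ℝ) i, fun d j => b.repr (c j) d, ?_⟩
  ext i j
  have hsum : (∑ d, b.repr (c j) d • b d : W) = c j := b.sum_repr (c j)
  have h2 := congrArg (fun w : W => (w : m → ℝ) i) hsum
  simp only [AddSubmonoidClass.coe_finset_sum, SetLike.val_smul, Finset.sum_apply,
    Pi.smul_apply, smul_eq_mul] at h2
  change A i j = ∑ d, (b d : m → ℝ) i * b.repr (c j) d
  refine h2.symm.trans ?_
  exact Finset.sum_congr rfl fun d _ => mul_comm _ _

open Matrix Finset in
lemma rank_hadamard_pow_mul_le {m n : Type*} [Fintype m] [Fintype n]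
    [DecidableEq m] [DecidableEq n] (r P : ℕ) (X : Matrix m (Fin r) ℝ)
    (Y : Matrix (Fin r) n ℝ) :
    (Matrix.of fun i j => ((X * Y) i j) ^ P).rank ≤ (r + P - 1).choose P := by
  classical
  let σ : (Fin P → Fin r) → Sym (Fin r) P :=
    fun f => ⟨Finset.univ.val.map f, by simp⟩
  let B : Matrix m (Sym (Fin r) P) ℝ :=
    Matrix.of fun i μ => ((μ : Multiset (Fin r)).map (fun d => X i d)).prod
  let C : Matrix (Sym (Fin r) P) n ℝ :=
    Matrix.of fun μ j =>
      ((Finset.univ.filter (fun f : Fin P → Fin r => σ f = μ)).card : ℝ) *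
        ((μ : Multiset (Fin r)).map (fun d => Y d j)).prod
  have key : (Matrix.of fun i j => ((X * Y) i j) ^ P) = B * C := by
    ext i j
    simp only [Matrix.of_apply, Matrix.mul_apply]
    rw [show ∑ d, X i d * Y d j = ∑ d ∈ univ, (fun d => X i d * Y d j) d from rfl,
      Finset.sum_pow' univ (fun d => X i d * Y d j) P, Fintype.piFinset_univ]
    rw [← Finset.sum_fiberwise_of_maps_to (g := σ)
      (t := (univ : Finset (Sym (Fin r) P))) (fun f _ => mem_univ _)
      (fun f => ∏ k, (X i (f k) * Y (f k) j))]
    · refine Finset.sum_congr rfl fun μ _ => ?_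
      have hval : ∀ f ∈ (univ : Finset (Fin P → Fin r)).filter (fun f => σ f = μ),
          (∏ k, (X i (f k) * Y (f k) j)) =
            ((μ : Multiset (Fin r)).map (fun d => X i d)).prod *
              ((μ : Multiset (Fin r)).map (fun d => Y d j)).prod := by
        intro f hf
        rw [Finset.mem_filter] at hf
        have hμ : (μ : Multiset (Fin r)) = Finset.univ.val.map f := by
          rw [← hf.2]; rfl
        rw [Finset.prod_mul_distrib, hμ, Multiset.map_map, Multiset.map_map,
          Finset.prod_eq_multiset_prod, Finset.prod_eq_multiset_prod]
        rfl
      rw [Finset.sum_congr rfl hval, Finset.sum_const, nsmul_eq_mul]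
      simp only [B, C, Matrix.of_apply]
      ring
  rw [key]
  calc (B * C).rank ≤ B.rank := Matrix.rank_mul_le_left B C
    _ ≤ Fintype.card (Sym (Fin r) P) := Matrix.rank_le_card_width B
    _ = (Fintype.card (Fin r) + P - 1).choose P := Sym.card_sym_eq_choose P
    _ = (r + P - 1).choose P := by rw [Fintype.card_fin]

/-- The rank of the `P`-th Hadamard power of a matrix of rank at most `D` is at
most the multiset coefficient `C(D + P - 1, P)`. -/
theorem rank_hadamard_power_le {m n : Type*} [Fintype m] [Fintype n]
    [DecidableEq m] [DecidableEq n] (A : Matrix m n ℝ) (D P : ℕ)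
    (hA : A.rank ≤ D) :
    (Matrix.of fun i j => (A i j) ^ P).rank ≤ (D + P - 1).choose P := by
  obtain ⟨X, Y, hXY⟩ := exists_factorization A
  calc (Matrix.of fun i j => (A i j) ^ P).rank
      = (Matrix.of fun i j => ((X * Y) i j) ^ P).rank := by rw [← hXY]
    _ ≤ (A.rank + P - 1).choose P := rank_hadamard_pow_mul_le A.rank P X Y
    _ ≤ (D + P - 1).choose P :=
        Nat.choose_le_choose P (by omega)
end

section
/- In an undirected graph G = (V, E) where every vertex has a self-loop, for any subset C ⊆ V of vertices each having at least one neighbor other than itself, the number of walks of length l from C to V satisfies ρ_l(C, V) ≤ (1/2)·ρ_{l+2}(C, V) for every l ∈ N_{≥0}. -/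
/-- The number of length-`l` walks in the graph `G` whose first vertex lies in
`C` and whose last vertex lies in `T`. -/
noncomputable def walkCount {V : Type*} (G : V → V → Prop) (C T : Set V) (l : ℕ) : ℕ :=
  Nat.card {w : Fin (l + 1) → V //
    (∀ k : Fin l, G (w k.castSucc) (w k.succ)) ∧ w 0 ∈ C ∧ w (Fin.last l) ∈ T}

/-- In an undirected graph with all self-loops, for a set `C` of vertices each
having a neighbor other than itself, the number of length-`l` walks from `C`
satisfies `ρ_l(C, V) ≤ (1/2) · ρ_{l+2}(C, V)`. -/
theorem walkCount_le_half_walkCount_add_two {V : Type*} [Fintype V]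
    (G : V → V → Prop) (hsymm : ∀ i j, G i j → G j i) (hloop : ∀ i, G i i)
    (C : Set V) (hC : ∀ i ∈ C, ∃ j, j ≠ i ∧ G i j) (l : ℕ) :
    (walkCount G C Set.univ l : ℝ)
      ≤ (1 / 2) * (walkCount G C Set.univ (l + 2) : ℝ) := by
  classical
  cases isEmpty_or_nonempty V with
  | inl h =>
    have hA : walkCount G C Set.univ l = 0 := by
      have : IsEmpty {w : Fin (l + 1) → V //
          (∀ k : Fin l, G (w k.castSucc) (w k.succ)) ∧ w 0 ∈ C ∧
            w (Fin.last l) ∈ Set.univ} := ⟨fun ⟨w, _⟩ => (h.false (w 0)).elim⟩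
      exact Nat.card_of_isEmpty
    have hB : walkCount G C Set.univ (l + 2) = 0 := by
      have : IsEmpty {w : Fin (l + 2 + 1) → V //
          (∀ k : Fin (l + 2), G (w k.castSucc) (w k.succ)) ∧ w 0 ∈ C ∧
            w (Fin.last (l + 2)) ∈ Set.univ} := ⟨fun ⟨w, _⟩ => (h.false (w 0)).elim⟩
      exact Nat.card_of_isEmpty
    rw [hA, hB]; norm_num
  | inr hne =>
    set A := {w : Fin (l + 1) → V //
      (∀ k : Fin l, G (w k.castSucc) (w k.succ)) ∧ w 0 ∈ C ∧ w (Fin.last l) ∈ Set.univ} with hA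
    set B := {w : Fin (l + 2 + 1) → V //
      (∀ k : Fin (l + 2), G (w k.castSucc) (w k.succ)) ∧ w 0 ∈ C ∧
        w (Fin.last (l + 2)) ∈ Set.univ} with hB
    -- a chosen neighbor function
    let nbr : V → V := fun i => if h : ∃ j, j ≠ i ∧ G i j then h.choose else i
    have hnbr : ∀ i ∈ C, nbr i ≠ i ∧ G i (nbr i) := by
      intro i hi
      have h : ∃ j, j ≠ i ∧ G i j := hC i hi
      simpa [nbr, h] using h.choose_spec
    -- extension of a walk by prepending two vertices
    let ext : (Fin (l + 1) → V) → V → (Fin (l + 2 + 1) → V) := fun w v k =>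
      if k.val = 0 then w 0 else if k.val = 1 then v else w ⟨k.val - 2, by omega⟩
    have ext_mem : ∀ (w : A) (v : V), G (w.1 0) v → G v (w.1 0) →
        (∀ k : Fin (l + 2), G (ext w.1 v k.castSucc) (ext w.1 v k.succ)) ∧
          (ext w.1 v) 0 ∈ C ∧ (ext w.1 v) (Fin.last (l + 2)) ∈ Set.univ := by
      intro w v hv hv'
      refine ⟨?_, ?_, trivial⟩
      · intro k
        have hks : (k.succ : Fin (l + 2 + 1)).val = k.val + 1 := rfl
        have hkc : (k.castSucc : Fin (l + 2 + 1)).val = k.val := rfl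
        rcases Nat.lt_or_ge k.val 2 with h2 | h2
        · interval_cases h : k.val
          · simpa [ext, hks, hkc, h] using hv
          · have : ((1 : Fin (l + 2 + 1)) : ℕ) = 1 := by simp
            simpa [ext, hks, hkc, h, show k ≠ 0 from fun e => by simp [e] at h] using hv'
        · have hk : k.val - 2 < l := by omega
          have := w.2.1 ⟨k.val - 2, hk⟩
          have e1 : ext w.1 v k.castSucc = w.1 ⟨k.val - 2, by omega⟩ := by
            simp only [ext, hkc]
            rw [if_neg (by omega), if_neg (by omega)]
          have e2 : ext w.1 v k.succ = w.1 ⟨k.val - 1, by omega⟩ := by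
            simp only [ext, hks]
            rw [if_neg (by omega), if_neg (by omega)]
            congr 1
            all_goals exact Fin.ext (by simp; omega)
          have c1 : (⟨k.val - 2, hk⟩ : Fin l).castSucc = (⟨k.val - 2, by omega⟩ : Fin (l + 1)) :=
            Fin.ext rfl
          have c2 : (⟨k.val - 2, hk⟩ : Fin l).succ = (⟨k.val - 1, by omega⟩ : Fin (l + 1)) :=
            Fin.ext (by simp [Fin.val_succ]; omega)
          rw [c1, c2] at this
          rw [e1, e2]
          exact this
      · simpa [ext] using w.2.2.1
    -- the injection
    let F : A ⊕ A → B := fun x =>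
      match x with
      | Sum.inl w => ⟨ext w.1 (w.1 0), ext_mem w (w.1 0) (hloop _) (hloop _)⟩
      | Sum.inr w => ⟨ext w.1 (nbr (w.1 0)),
          ext_mem w (nbr (w.1 0)) (hnbr _ w.2.2.1).2 (hsymm _ _ (hnbr _ w.2.2.1).2)⟩
    have key : ∀ (w w' : A) v v', ext w.1 v = ext w'.1 v' → w = w' ∧ v = v' := by
      intro w w' v v' h
      have hw : w.1 = w'.1 := by
        funext k
        have := congrFun h ⟨k.val + 2, by omega⟩
        simp only [ext] at this
        rw [if_neg (by omega), if_neg (by omega), if_neg (by omega), if_neg (by omega)] at this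
        convert this using 2 <;> exact Fin.ext (by simp)
      have hv : v = v' := by
        have := congrFun h ⟨1, by omega⟩
        simpa [ext] using this
      exact ⟨Subtype.ext hw, hv⟩
    have hFinj : Function.Injective F := by
      intro x y hxy
      match x, y with
      | Sum.inl w, Sum.inl w' =>
        have := key w w' _ _ (congrArg Subtype.val hxy)
        rw [this.1]
      | Sum.inr w, Sum.inr w' =>
        have := key w w' _ _ (congrArg Subtype.val hxy)
        rw [this.1]
      | Sum.inl w, Sum.inr w' =>
        exfalso
        obtain ⟨h1, h2⟩ := key w w' _ _ (congrArg Subtype.val hxy)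
        rw [h1] at h2
        exact (hnbr _ w'.2.2.1).1 h2.symm
      | Sum.inr w, Sum.inl w' =>
        exfalso
        obtain ⟨h1, h2⟩ := key w w' _ _ (congrArg Subtype.val hxy)
        rw [h1] at h2
        exact (hnbr _ w'.2.2.1).1 h2
    have hcard : Nat.card (A ⊕ A) ≤ Nat.card B := Nat.card_le_card_of_injective F hFinj
    rw [Nat.card_sum] at hcard
    have e1 : walkCount G C Set.univ l = Nat.card A := rfl
    have e2 : walkCount G C Set.univ (l + 2) = Nat.card B := rfl
    have hAB : 2 * walkCount G C Set.univ l ≤ walkCount G C Set.univ (l + 2) := by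
      rw [e1, e2]; omega
    have := (Nat.cast_le (α := ℝ)).2 hAB
    push_cast at this
    linarith
end

section
/- In an undirected graph with all self-loops, if C is a set of vertices each having an edge to some other vertex, then for any L ∈ N, Σ_{l=1}^{L} ρ_{L-l}(C, V) ≤ 4·ρ_{L-1}(C, V), where ρ_k(C, V) is the number of length-k walks originating from C. -/
lemma walk_prepend {V : Type*} (G : V → V → Prop) (l : ℕ)
    (u : Fin (l + 1) → V) (h : ∀ k : Fin l, G (u k.castSucc) (u k.succ))
    (a : V) (ha : G a (u 0)) :
    ∀ k : Fin (l + 1), G ((Fin.cons a u : Fin (l + 2) → V) k.castSucc)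
      ((Fin.cons a u : Fin (l + 2) → V) k.succ) := by
  intro k
  refine Fin.cases ?_ ?_ k
  · simpa using ha
  · intro j
    have e : (j.succ).castSucc = (j.castSucc).succ := (Fin.succ_castSucc j).symm
    rw [e, Fin.cons_succ, Fin.cons_succ]
    exact h j

lemma walkCount_le_succ {V : Type*} [Fintype V] (G : V → V → Prop)
    (hloop : ∀ i, G i i) (C : Set V) (l : ℕ) :
    walkCount G C Set.univ l ≤ walkCount G C Set.univ (l + 1) := by
  apply Nat.card_le_card_of_injective
    (fun w : {w : Fin (l + 1) → V //
        (∀ k : Fin l, G (w k.castSucc) (w k.succ)) ∧ w 0 ∈ C ∧ w (Fin.last l) ∈ Set.univ} =>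
      (⟨Fin.cons (w.1 0) w.1,
        walk_prepend G l w.1 w.2.1 (w.1 0) (hloop _),
        by simpa using w.2.2.1, trivial⟩ :
       {w : Fin (l + 2) → V //
        (∀ k : Fin (l + 1), G (w k.castSucc) (w k.succ)) ∧
          w 0 ∈ C ∧ w (Fin.last (l + 1)) ∈ Set.univ}))
  intro w w' h
  apply Subtype.ext
  have := congrArg (fun f => Fin.tail f.1) h
  simpa [Fin.tail_cons] using this

lemma two_walkCount_le {V : Type*} [Fintype V] (G : V → V → Prop)
    (hsymm : ∀ i j, G i j → G j i) (hloop : ∀ i, G i i)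
    (C : Set V) (hC : ∀ i ∈ C, ∃ j, j ≠ i ∧ G i j) (l : ℕ) :
    2 * walkCount G C Set.univ l ≤ walkCount G C Set.univ (l + 2) := by
  set S := {w : Fin (l + 1) → V //
      (∀ k : Fin l, G (w k.castSucc) (w k.succ)) ∧ w 0 ∈ C ∧ w (Fin.last l) ∈ Set.univ} with hS
  set T := {w : Fin (l + 3) → V //
      (∀ k : Fin (l + 2), G (w k.castSucc) (w k.succ)) ∧
        w 0 ∈ C ∧ w (Fin.last (l + 2)) ∈ Set.univ} with hT
  have gprop : ∀ (w : S) (v : V), G (w.1 0) v → G v (w.1 0) →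
      (∀ k : Fin (l + 2),
        G ((Fin.cons (w.1 0) (Fin.cons v w.1) : Fin (l + 3) → V) k.castSucc)
          ((Fin.cons (w.1 0) (Fin.cons v w.1) : Fin (l + 3) → V) k.succ)) ∧
        (Fin.cons (w.1 0) (Fin.cons v w.1) : Fin (l + 3) → V) 0 ∈ C ∧
        (Fin.cons (w.1 0) (Fin.cons v w.1) : Fin (l + 3) → V) (Fin.last (l + 2)) ∈ Set.univ := by
    intro w v h1 h2
    refine ⟨?_, by simpa using w.2.2.1, trivial⟩
    exact walk_prepend G (l + 1) (Fin.cons v w.1)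
      (walk_prepend G l w.1 w.2.1 v h2) (w.1 0) (by simpa using h1)
  have nbex : ∀ w : S, ∃ j, j ≠ w.1 0 ∧ G (w.1 0) j := fun w => hC (w.1 0) w.2.2.1
  choose nb nb_ne nb_edge using nbex
  have key : Nat.card (S ⊕ S) ≤ Nat.card T := by
    apply Nat.card_le_card_of_injective (Sum.elim
      (fun w : S => (⟨Fin.cons (w.1 0) (Fin.cons (w.1 0) w.1),
        gprop w (w.1 0) (hloop _) (hloop _)⟩ : T))
      (fun w : S => (⟨Fin.cons (w.1 0) (Fin.cons (nb w) w.1),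
        gprop w (nb w) (nb_edge w) (hsymm _ _ (nb_edge w))⟩ : T)))
    have tails : ∀ (a v : V) (u : Fin (l + 1) → V) (a' v' : V) (u' : Fin (l + 1) → V),
        (Fin.cons a (Fin.cons v u) : Fin (l + 3) → V) = Fin.cons a' (Fin.cons v' u') →
        u = u' ∧ v = v' := by
      intro a v u a' v' u' h
      constructor
      · funext i
        have := congrFun h (i.succ.succ)
        simpa [Fin.cons_succ] using this
      · have := congrFun h ((0 : Fin (l + 2)).succ)
        simpa [Fin.cons_succ, Fin.cons_zero] using this
    rintro (w | w) (w' | w') h <;>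
      simp only [Sum.elim_inl, Sum.elim_inr, Subtype.mk.injEq] at h
    · obtain ⟨hu, _⟩ := tails _ _ _ _ _ _ h
      exact congrArg Sum.inl (Subtype.ext hu)
    · obtain ⟨hu, hv⟩ := tails _ _ _ _ _ _ h
      have hw : w = w' := Subtype.ext hu
      subst hw
      exact absurd hv.symm (nb_ne w)
    · obtain ⟨hu, hv⟩ := tails _ _ _ _ _ _ h
      have hw : w = w' := Subtype.ext hu
      subst hw
      exact absurd hv (nb_ne w)
    · obtain ⟨hu, _⟩ := tails _ _ _ _ _ _ h
      exact congrArg Sum.inr (Subtype.ext hu)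
  have hsum : Nat.card (S ⊕ S) = 2 * Nat.card S := by
    rw [Nat.card_sum, two_mul]
  calc 2 * walkCount G C Set.univ l = Nat.card (S ⊕ S) := hsum.symm
    _ ≤ Nat.card T := key
    _ = walkCount G C Set.univ (l + 2) := rfl

lemma sum_range_walkCount_le {V : Type*} [Fintype V] (G : V → V → Prop)
    (hsymm : ∀ i j, G i j → G j i) (hloop : ∀ i, G i i)
    (C : Set V) (hC : ∀ i ∈ C, ∃ j, j ≠ i ∧ G i j) (n : ℕ) :
    ∑ k ∈ Finset.range (n + 1), walkCount G C Set.univ k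
      ≤ 2 * walkCount G C Set.univ n + 2 * walkCount G C Set.univ (n - 1) := by
  induction n with
  | zero => rw [Finset.sum_range_one]; omega
  | succ n ih =>
    rw [Finset.sum_range_succ]
    cases n with
    | zero =>
      have hmono := walkCount_le_succ G hloop C 0
      simp only [Nat.zero_add, Finset.sum_range_one, Nat.zero_sub, Nat.sub_self] at *
      omega
    | succ m =>
      have h2 := two_walkCount_le G hsymm hloop C hC m
      simp only [Nat.add_sub_cancel] at *
      have e : m + 1 + 1 = m + 2 := rfl
      rw [e] at ih ⊢
      omega

/-- In an undirected graph with all self-loops, for a set `C` of vertices each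
having a neighbor other than itself, `∑_{l=1}^{L} ρ_{L-l}(C, V) ≤ 4 · ρ_{L-1}(C, V)`. -/
theorem sum_walkCount_le_four_walkCount {V : Type*} [Fintype V]
    (G : V → V → Prop) (hsymm : ∀ i j, G i j → G j i) (hloop : ∀ i, G i i)
    (C : Set V) (hC : ∀ i ∈ C, ∃ j, j ≠ i ∧ G i j) (L : ℕ) (hL : 1 ≤ L) :
    ∑ l ∈ Finset.Icc 1 L, walkCount G C Set.univ (L - l)
      ≤ 4 * walkCount G C Set.univ (L - 1) := by
  obtain ⟨n, rfl⟩ : ∃ n, L = n + 1 := ⟨L - 1, by omega⟩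
  have hre : ∑ l ∈ Finset.Icc 1 (n + 1), walkCount G C Set.univ (n + 1 - l)
      = ∑ k ∈ Finset.range (n + 1), walkCount G C Set.univ k := by
    rw [← Finset.Ico_add_one_right_eq_Icc, Finset.sum_Ico_eq_sum_range]
    have e : n + 1 + 1 - 1 = n + 1 := rfl
    rw [e]
    have : ∀ i ∈ Finset.range (n + 1),
        walkCount G C Set.univ (n + 1 - (1 + i))
          = walkCount G C Set.univ (n + 1 - 1 - i) := by
      intro i _; congr 1; omega
    rw [Finset.sum_congr rfl this]
    simpa using Finset.sum_range_reflect (fun k => walkCount G C Set.univ k) (n + 1)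
  rw [hre]
  have hmain := sum_range_walkCount_le G hsymm hloop C hC n
  have hmono : walkCount G C Set.univ (n - 1) ≤ walkCount G C Set.univ n := by
    cases n with
    | zero => simp
    | succ m => simpa using walkCount_le_succ G hloop C m
  simp only [Nat.add_sub_cancel] at *
  omega
end

section
/- Let the chain graph on vertices V = [n] have edges {i, i+1} for i ∈ [n-1] plus all self-loops. For any non-empty proper subset I ⊊ V, there exists an admissible subset C of the boundary C_I with |C| ≥ |C_I| / 2. -/
variable {V : Type*}

/-- The neighborhood of a vertex. -/
def nbhd (G : V → V → Prop) (i : V) : Set V := {j | G i j}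

/-- The neighborhood of a set of vertices. -/
def nbhdSet (G : V → V → Prop) (S : Set V) : Set V := ⋃ i ∈ S, nbhd G i

/-- `I` and `J` have no repeating shared neighbors: every shared neighbor has
exactly one neighbor in each of `I` and `J`. -/
def NoRepShared (G : V → V → Prop) (I J : Set V) : Prop :=
  ∀ k ∈ nbhdSet G I ∩ nbhdSet G J,
    (nbhd G k ∩ I).ncard = 1 ∧ (nbhd G k ∩ J).ncard = 1

/-- The boundary of the partition `(I, Iᶜ)`: vertices with an edge crossing it. -/
def boundarySet (G : V → V → Prop) (I : Set V) : Set V :=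
  {i ∈ I | (nbhd G i ∩ Iᶜ).Nonempty} ∪ {j ∈ Iᶜ | (nbhd G j ∩ I).Nonempty}

/-- `C` is an admissible subset of the boundary `C_I`. -/
def Admissible (G : V → V → Prop) (I C : Set V) : Prop :=
  C ⊆ boundarySet G I ∧
    ∃ I' J' : Set V, I' ⊆ I ∧ J' ⊆ Iᶜ ∧ NoRepShared G I' J' ∧
      C = nbhdSet G I' ∩ nbhdSet G J'

/-- Greedy 3-separated covering subset of a finite set of naturals. -/
lemma exists_net (S : Finset ℕ) :
    ∃ T : Finset ℕ, T ⊆ S ∧ (∀ a ∈ T, ∀ b ∈ T, a ≠ b → a + 3 ≤ b ∨ b + 3 ≤ a) ∧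
      ∀ p ∈ S, ∃ q ∈ T, q ≤ p ∧ p ≤ q + 2 := by
  classical
  induction S using Finset.strongInduction with
  | _ S ih =>
    by_cases hS : S.Nonempty
    · set m := S.min' hS with hm
      have hmS : m ∈ S := S.min'_mem hS
      set S' := S.filter (fun x => m + 3 ≤ x) with hS'
      have hss : S' ⊂ S := by
        refine Finset.ssubset_iff_of_subset (Finset.filter_subset _ _) |>.mpr ?_
        exact ⟨m, hmS, by simp [hS']⟩
      obtain ⟨T', hT'S, hsep', hcov'⟩ := ih S' hss
      refine ⟨insert m T', ?_, ?_, ?_⟩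
      · intro x hx
        rcases Finset.mem_insert.mp hx with rfl | hx
        · exact hmS
        · exact Finset.filter_subset _ _ (hT'S hx)
      · intro a ha b hb hab
        rcases Finset.mem_insert.mp ha with rfl | ha <;>
          rcases Finset.mem_insert.mp hb with rfl | hb
        · exact absurd rfl hab
        · exact Or.inl (Finset.mem_filter.mp (hT'S hb)).2
        · exact Or.inr (Finset.mem_filter.mp (hT'S ha)).2
        · exact hsep' a ha b hb hab
      · intro p hp
        by_cases hp3 : m + 3 ≤ p
        · obtain ⟨q, hq, h1, h2⟩ := hcov' p (Finset.mem_filter.mpr ⟨hp, hp3⟩)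
          exact ⟨q, Finset.mem_insert_of_mem hq, h1, h2⟩
        · exact ⟨m, Finset.mem_insert_self _ _, S.min'_le p hp, by omega⟩
    · refine ⟨∅, by simp, by simp, ?_⟩
      intro p hp
      exact absurd ⟨p, hp⟩ hS

lemma keyI (Ib : ℕ → Prop) (T : Finset ℕ)
    (sep : ∀ q ∈ T, ∀ q' ∈ T, q ≠ q' → q + 3 ≤ q' ∨ q' + 3 ≤ q)
    (cross : ∀ q ∈ T, (Ib q ↔ ¬ Ib (q + 1)))
    {a a₂ b c q q₂ q' : ℕ}
    (hq : q ∈ T) (hq₂ : q₂ ∈ T) (hq' : q' ∈ T)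
    (ha : a = q ∨ a = q + 1) (ha₂ : a₂ = q₂ ∨ a₂ = q₂ + 1) (hb : b = q' ∨ b = q' + 1)
    (haI : Ib a) (ha₂I : Ib a₂) (hbI : ¬ Ib b)
    (hac : a = c ∨ a + 1 = c ∨ c + 1 = a)
    (ha₂c : a₂ = c ∨ a₂ + 1 = c ∨ c + 1 = a₂)
    (hbc : b = c ∨ b + 1 = c ∨ c + 1 = b) : a = a₂ := by
  by_cases h12 : q = q₂
  · subst h12
    have hc := cross q hq
    rcases ha with h1 | h1 <;> rcases ha₂ with h2 | h2
    · omega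
    · exact absurd (h2 ▸ ha₂I) (hc.mp (h1 ▸ haI))
    · exact absurd (h1 ▸ haI) (hc.mp (h2 ▸ ha₂I))
    · omega
  · have hsep := sep q hq q₂ hq₂ h12
    have hbna : b ≠ a := fun h => hbI (h ▸ haI)
    have hbna₂ : b ≠ a₂ := fun h => hbI (h ▸ ha₂I)
    have hs1 : q = q' ∨ q + 3 ≤ q' ∨ q' + 3 ≤ q := by
      by_cases h : q = q'
      · exact Or.inl h
      · exact Or.inr (sep q hq q' hq' h)
    have hs2 : q₂ = q' ∨ q₂ + 3 ≤ q' ∨ q' + 3 ≤ q₂ := by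
      by_cases h : q₂ = q'
      · exact Or.inl h
      · exact Or.inr (sep q₂ hq₂ q' hq' h)
    omega

lemma keyJ (Ib : ℕ → Prop) (T : Finset ℕ)
    (sep : ∀ q ∈ T, ∀ q' ∈ T, q ≠ q' → q + 3 ≤ q' ∨ q' + 3 ≤ q)
    (cross : ∀ q ∈ T, (Ib q ↔ ¬ Ib (q + 1)))
    {a a₂ b c q q₂ q' : ℕ}
    (hq : q ∈ T) (hq₂ : q₂ ∈ T) (hq' : q' ∈ T)
    (ha : a = q ∨ a = q + 1) (ha₂ : a₂ = q₂ ∨ a₂ = q₂ + 1) (hb : b = q' ∨ b = q' + 1)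
    (haI : ¬ Ib a) (ha₂I : ¬ Ib a₂) (hbI : Ib b)
    (hac : a = c ∨ a + 1 = c ∨ c + 1 = a)
    (ha₂c : a₂ = c ∨ a₂ + 1 = c ∨ c + 1 = a₂)
    (hbc : b = c ∨ b + 1 = c ∨ c + 1 = b) : a = a₂ := by
  by_cases h12 : q = q₂
  · subst h12
    have hc := cross q hq
    rcases ha with h1 | h1 <;> rcases ha₂ with h2 | h2
    · omega
    · exact absurd ((hc.mpr (h2 ▸ ha₂I)) ) (h1 ▸ haI)
    · exact absurd ((hc.mpr (h1 ▸ haI)) ) (h2 ▸ ha₂I)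
    · omega
  · have hsep := sep q hq q₂ hq₂ h12
    have hbna : b ≠ a := fun h => haI (h ▸ hbI)
    have hbna₂ : b ≠ a₂ := fun h => ha₂I (h ▸ hbI)
    have hs1 : q = q' ∨ q + 3 ≤ q' ∨ q' + 3 ≤ q := by
      by_cases h : q = q'
      · exact Or.inl h
      · exact Or.inr (sep q hq q' hq' h)
    have hs2 : q₂ = q' ∨ q₂ + 3 ≤ q' ∨ q' + 3 ≤ q₂ := by
      by_cases h : q₂ = q'
      · exact Or.inl h
      · exact Or.inr (sep q₂ hq₂ q' hq' h)
    omega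

set_option maxHeartbeats 1600000 in
/-- In the chain graph on `Fin n` (with all self-loops), for any non-empty
proper subset `I`, there is an admissible subset `C` of the boundary `C_I`
with `|C| ≥ |C_I| / 2`. -/
theorem chain_graph_admissible_half (n : ℕ) (I : Set (Fin n))
    (hne : I.Nonempty) (hproper : I ≠ Set.univ) :
    ∃ C : Set (Fin n),
      Admissible (fun i j : Fin n => i = j ∨ (i : ℕ) + 1 = j ∨ (j : ℕ) + 1 = i) I C ∧
      (boundarySet (fun i j : Fin n => i = j ∨ (i : ℕ) + 1 = j ∨ (j : ℕ) + 1 = i) I).ncard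
        ≤ 2 * C.ncard := by
  classical
  set G : Fin n → Fin n → Prop :=
    fun i j : Fin n => i = j ∨ (i : ℕ) + 1 = j ∨ (j : ℕ) + 1 = i with hGdef
  obtain ⟨v0, hv0⟩ := hne
  have hn : 0 < n := v0.pos
  -- nat-level membership predicate
  set Ib : ℕ → Prop := fun m => ∃ h : m < n, (⟨m, h⟩ : Fin n) ∈ I with hIbdef
  have memIb : ∀ v : Fin n, Ib (v : ℕ) ↔ v ∈ I := by
    intro v
    constructor
    · rintro ⟨h, hv⟩
      exact Fin.eta v h ▸ hv
    · intro hv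
      exact ⟨v.isLt, by rw [Fin.eta]; exact hv⟩
  have Gval : ∀ v w : Fin n,
      G v w ↔ ((v : ℕ) = (w : ℕ) ∨ (v : ℕ) + 1 = (w : ℕ) ∨ (w : ℕ) + 1 = (v : ℕ)) := by
    intro v w
    simp [hGdef, Fin.ext_iff]
  have Gsym : ∀ v w : Fin n, G v w → G w v := by
    intro v w h
    rw [Gval] at h ⊢
    omega
  have memN : ∀ (A : Set (Fin n)) (k : Fin n), k ∈ nbhdSet G A ↔ ∃ i ∈ A, G i k := by
    intro A k
    simp [nbhdSet, nbhd]
  -- crossing positions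
  set S : Finset ℕ :=
    (Finset.range n).filter (fun p => p + 1 < n ∧ (Ib p ↔ ¬ Ib (p + 1))) with hSdef
  have memS : ∀ p, p ∈ S ↔ (p + 1 < n ∧ (Ib p ↔ ¬ Ib (p + 1))) := by
    intro p
    constructor
    · intro h
      exact (Finset.mem_filter.mp h).2
    · intro h
      exact Finset.mem_filter.mpr ⟨Finset.mem_range.mpr (by omega), h⟩
  obtain ⟨T, hTS, hsep, hcov⟩ := exists_net S
  have hcross : ∀ q ∈ T, (Ib q ↔ ¬ Ib (q + 1)) := fun q hq => ((memS q).mp (hTS hq)).2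
  have hqn : ∀ q ∈ T, q + 1 < n := fun q hq => ((memS q).mp (hTS hq)).1
  set I' : Set (Fin n) := {v | v ∈ I ∧ ∃ q ∈ T, (v : ℕ) = q ∨ (v : ℕ) = q + 1} with hI'def
  set J' : Set (Fin n) := {v | v ∉ I ∧ ∃ q ∈ T, (v : ℕ) = q ∨ (v : ℕ) = q + 1} with hJ'def
  set C : Set (Fin n) := nbhdSet G I' ∩ nbhdSet G J' with hCdef
  -- witnesses on each selected edge
  have edge_wit : ∀ q ∈ T, ∃ x y : Fin n, x ∈ I ∧ y ∉ I ∧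
      ((x : ℕ) = q ∨ (x : ℕ) = q + 1) ∧ ((y : ℕ) = q ∨ (y : ℕ) = q + 1) := by
    intro q hq
    have h1 : q + 1 < n := hqn q hq
    have h0 : q < n := by omega
    by_cases hIq : Ib q
    · refine ⟨⟨q, h0⟩, ⟨q + 1, h1⟩, ?_, ?_, Or.inl rfl, Or.inr rfl⟩
      · exact (memIb ⟨q, h0⟩).mp hIq
      · intro hmem
        exact ((hcross q hq).mp hIq) ((memIb ⟨q + 1, h1⟩).mpr hmem)
    · have hIq1 : Ib (q + 1) := by
        have := hcross q hq
        tauto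
      refine ⟨⟨q + 1, h1⟩, ⟨q, h0⟩, (memIb ⟨q + 1, h1⟩).mp hIq1,
        fun h => hIq ((memIb ⟨q, h0⟩).mpr h), Or.inr rfl, Or.inl rfl⟩
  -- C is inside the boundary
  have hCb : C ⊆ boundarySet G I := by
    rintro k ⟨hk1, hk2⟩
    obtain ⟨i, hiI', hGik⟩ := (memN I' k).mp hk1
    obtain ⟨j, hjJ', hGjk⟩ := (memN J' k).mp hk2
    by_cases hkI : k ∈ I
    · exact Or.inl ⟨hkI, j, Gsym j k hGjk, hjJ'.1⟩
    · exact Or.inr ⟨hkI, i, Gsym i k hGik, hiI'.1⟩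
  -- no repeating shared neighbors
  have hNRS : NoRepShared G I' J' := by
    rintro k ⟨hk1, hk2⟩
    obtain ⟨i, hiI'mem, hGik⟩ := (memN I' k).mp hk1
    obtain ⟨j, hjJ'mem, hGjk⟩ := (memN J' k).mp hk2
    obtain ⟨hiI, q, hqT, hiq⟩ := hiI'mem
    obtain ⟨hjI, q', hq'T, hjq⟩ := hjJ'mem
    have hiIb : Ib (i : ℕ) := (memIb i).mpr hiI
    have hjIb : ¬ Ib (j : ℕ) := fun h => hjI ((memIb j).mp h)
    have hic : (i : ℕ) = (k : ℕ) ∨ (i : ℕ) + 1 = (k : ℕ) ∨ (k : ℕ) + 1 = (i : ℕ) :=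
      (Gval i k).mp hGik
    have hjc : (j : ℕ) = (k : ℕ) ∨ (j : ℕ) + 1 = (k : ℕ) ∨ (k : ℕ) + 1 = (j : ℕ) :=
      (Gval j k).mp hGjk
    constructor
    · have heq : nbhd G k ∩ I' = {i} := by
        apply Set.eq_singleton_iff_unique_mem.mpr
        constructor
        · exact ⟨Gsym i k hGik, hiI, q, hqT, hiq⟩
        · rintro x ⟨hGkx, hxI, q₂, hq₂T, hxq⟩
          have hxc : (x : ℕ) = (k : ℕ) ∨ (x : ℕ) + 1 = (k : ℕ) ∨ (k : ℕ) + 1 = (x : ℕ) := by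
            have := (Gval k x).mp hGkx
            omega
          have hxIb : Ib (x : ℕ) := (memIb x).mpr hxI
          exact Fin.ext (keyI Ib T hsep hcross hq₂T hqT hq'T hxq hiq hjq
            hxIb hiIb hjIb hxc hic hjc)
      rw [heq]
      exact Set.ncard_singleton i
    · have heq : nbhd G k ∩ J' = {j} := by
        apply Set.eq_singleton_iff_unique_mem.mpr
        constructor
        · exact ⟨Gsym j k hGjk, hjI, q', hq'T, hjq⟩
        · rintro x ⟨hGkx, hxI, q₂, hq₂T, hxq⟩
          have hxc : (x : ℕ) = (k : ℕ) ∨ (x : ℕ) + 1 = (k : ℕ) ∨ (k : ℕ) + 1 = (x : ℕ) := by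
            have := (Gval k x).mp hGkx
            omega
          have hxIb : ¬ Ib (x : ℕ) := fun h => hxI ((memIb x).mp h)
          exact Fin.ext (keyJ Ib T hsep hcross hq₂T hq'T hqT hxq hjq hiq
            hxIb hjIb hiIb hxc hjc hic)
      rw [heq]
      exact Set.ncard_singleton j
  -- every boundary vertex is an endpoint of a crossing edge
  have bd_cross : ∀ v ∈ boundarySet G I, ∃ p ∈ S, ((v : ℕ) = p ∨ (v : ℕ) = p + 1) := by
    intro v hv
    rcases hv with ⟨hvI, w, hGvw, hwc⟩ | ⟨hvc, w, hGvw, hwI⟩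
    · have hIbv : Ib (v : ℕ) := (memIb v).mpr hvI
      have hIbw : ¬ Ib (w : ℕ) := fun h => hwc ((memIb w).mp h)
      rcases (Gval v w).mp hGvw with h | h | h
      · exact absurd (Fin.ext h ▸ hvI) hwc
      · refine ⟨(v : ℕ), (memS _).mpr ⟨by rw [h]; exact w.isLt, ?_⟩, Or.inl rfl⟩
        rw [h]
        exact iff_of_true hIbv hIbw
      · refine ⟨(w : ℕ), (memS _).mpr ⟨by rw [h]; exact v.isLt, ?_⟩, Or.inr (by omega)⟩
        rw [h]
        exact iff_of_false hIbw (not_not_intro hIbv)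
    · have hIbv : ¬ Ib (v : ℕ) := fun h => hvc ((memIb v).mp h)
      have hIbw : Ib (w : ℕ) := (memIb w).mpr hwI
      rcases (Gval v w).mp hGvw with h | h | h
      · have hvw : v = w := Fin.ext h
        exact absurd hwI (hvw ▸ hvc)
      · refine ⟨(v : ℕ), (memS _).mpr ⟨by rw [h]; exact w.isLt, ?_⟩, Or.inl rfl⟩
        rw [h]
        exact iff_of_false hIbv (not_not_intro hIbw)
      · refine ⟨(w : ℕ), (memS _).mpr ⟨by rw [h]; exact v.isLt, ?_⟩, Or.inr (by omega)⟩
        rw [h]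
        exact iff_of_true hIbw hIbv
  -- upper bound on the boundary
  have hupper : (boundarySet G I).ncard ≤ 4 * T.card := by
    have h1 : (boundarySet G I).ncard ≤ (T.biUnion (fun q => Finset.Icc q (q + 3))).card := by
      rw [← Set.ncard_coe_finset]
      apply Set.ncard_le_ncard_of_injOn (fun v : Fin n => (v : ℕ))
      · intro v hv
        obtain ⟨p, hpS, hvp⟩ := bd_cross v hv
        obtain ⟨qq, hqT, hle1, hle2⟩ := hcov p hpS
        simp only [Finset.coe_biUnion, Set.mem_iUnion, Finset.mem_coe, Finset.coe_Icc,
          Set.mem_Icc]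
        exact ⟨qq, hqT, by omega, by omega⟩
      · exact fun a _ b _ h => Fin.ext h
    have h2 : (T.biUnion (fun q => Finset.Icc q (q + 3))).card ≤ 4 * T.card := by
      calc (T.biUnion (fun q => Finset.Icc q (q + 3))).card
          ≤ ∑ q ∈ T, (Finset.Icc q (q + 3)).card := Finset.card_biUnion_le
        _ = ∑ _q ∈ T, 4 := by
            apply Finset.sum_congr rfl
            intro q _
            rw [Nat.card_Icc]
            omega
        _ = 4 * T.card := by
            rw [Finset.sum_const, smul_eq_mul]
            ring
    omega
  -- lower bound on C
  set E : Finset ℕ := T.biUnion (fun q => ({q, q + 1} : Finset ℕ)) with hEdef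
  have hEcard : E.card = 2 * T.card := by
    rw [hEdef, Finset.card_biUnion]
    · rw [Finset.sum_congr rfl (fun q _ => by
        rw [Finset.card_insert_of_notMem (by simp), Finset.card_singleton]),
        Finset.sum_const, smul_eq_mul]
      ring
    · intro x hx y hy hxy
      have := hsep x hx y hy hxy
      simp only [Finset.disjoint_left, Finset.mem_insert, Finset.mem_singleton]
      omega
  have hEC : ∀ m ∈ E, ∃ hm : m < n, (⟨m, hm⟩ : Fin n) ∈ C := by
    intro m hm
    rw [hEdef, Finset.mem_biUnion] at hm
    obtain ⟨q, hqT, hmq⟩ := hm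
    simp only [Finset.mem_insert, Finset.mem_singleton] at hmq
    have hmn : m < n := by
      have := hqn q hqT
      omega
    obtain ⟨x, y, hxI, hyI, hxq, hyq⟩ := edge_wit q hqT
    refine ⟨hmn, ?_, ?_⟩
    · refine (memN I' ⟨m, hmn⟩).mpr ⟨x, ⟨hxI, q, hqT, hxq⟩, ?_⟩
      rw [Gval]
      simp only [Fin.val_mk]
      omega
    · refine (memN J' ⟨m, hmn⟩).mpr ⟨y, ⟨hyI, q, hqT, hyq⟩, ?_⟩
      rw [Gval]
      simp only [Fin.val_mk]
      omega
  have hEn : ∀ m ∈ E, m < n := fun m hm => (hEC m hm).1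
  have hlower : 2 * T.card ≤ C.ncard := by
    rw [← hEcard, ← Set.ncard_coe_finset]
    apply Set.ncard_le_ncard_of_injOn
      (fun m : ℕ => if h : m < n then (⟨m, h⟩ : Fin n) else ⟨0, hn⟩)
    · intro m hm
      obtain ⟨h, hmem⟩ := hEC m (Finset.mem_coe.mp hm)
      simpa [dif_pos h] using hmem
    · intro a ha b hb hfab
      have ha' : a < n := hEn a (Finset.mem_coe.mp ha)
      have hb' : b < n := hEn b (Finset.mem_coe.mp hb)
      simp only [dif_pos ha', dif_pos hb', Fin.mk.injEq] at hfab
      exact hfab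
  exact ⟨C, ⟨hCb, I', J', fun v hv => hv.1, fun v hv => hv.1, hNRS, rfl⟩, by omega⟩
end
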